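/- arXiv:2401.10552 — 3 statements merged into one kernel-verified Lean document; each statement's English description precedes it below -/
import Mathlib

section
/- Let −1 ≤ β < 1 and let b : [0,∞) → ℝ be a positive continuous function with b₁(1+t)^{−β} ≤ b(t) ≤ b₂(1+t)^{−β} for all t ≥ 0 and some b₁,b₂ > 0. Set B(t) := ∫₀^t b(s)ds, B₀ := ∫₀^∞ e^{−B(t)}dt, and g(t) := e^{B(t)}(B₀ − ∫₀^t e^{−B(τ)}dτ). Then there exists a constant C ≥ 1 such that C^{−1} b(t)^{−1} ≤ g(t) ≤ C b(t)^{−1} for all t ≥ 0. -/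
set_option autoImplicit false
set_option maxHeartbeats 1000000

open MeasureTheory Real Set

/-- Let `−1 ≤ β < 1` and let `b` be positive continuous with
`b₁(1+t)^{−β} ≤ b(t) ≤ b₂(1+t)^{−β}`.  With `B(t) = ∫₀^t b`, `B₀ = ∫₀^∞ e^{−B}` and
`g(t) = e^{B(t)}(B₀ − ∫₀^t e^{−B})`, there is `C ≥ 1` with
`C⁻¹ b(t)⁻¹ ≤ g(t) ≤ C b(t)⁻¹` for all `t ≥ 0`. -/
theorem aux_g_comparable_binv (β : ℝ) (hβ1 : -1 ≤ β) (hβ2 : β < 1)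
    (b : ℝ → ℝ) (hb_cont : ContinuousOn b (Ici 0)) (hb_pos : ∀ t, 0 ≤ t → 0 < b t)
    (b₁ b₂ : ℝ) (hb₁ : 0 < b₁) (hb₂ : 0 < b₂)
    (hlow : ∀ t, 0 ≤ t → b₁ * (1 + t) ^ (-β) ≤ b t)
    (hupp : ∀ t, 0 ≤ t → b t ≤ b₂ * (1 + t) ^ (-β))
    (B : ℝ → ℝ) (hB : ∀ t, B t = ∫ s in (0:ℝ)..t, b s)
    (B₀ : ℝ) (hB₀ : B₀ = ∫ t in Ioi (0:ℝ), Real.exp (-B t))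
    (g : ℝ → ℝ) (hg : ∀ t, g t = Real.exp (B t) * (B₀ - ∫ τ in (0:ℝ)..t, Real.exp (-B τ))) :
    ∃ C : ℝ, 1 ≤ C ∧ ∀ t, 0 ≤ t →
      C⁻¹ * (b t)⁻¹ ≤ g t ∧ g t ≤ C * (b t)⁻¹ := by
  -- extended coefficient
  set bb : ℝ → ℝ := fun t => b (max t 0) with hbb_def
  have hbb_cont : Continuous bb := by
    exact hb_cont.comp_continuous (continuous_id.max continuous_const) (fun x => le_max_right (x:ℝ) 0)
  have hbb_eq : ∀ t, 0 ≤ t → bb t = b t := by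
    intro t ht; simp [hbb_def, max_eq_left ht]
  have hbb_pos : ∀ t, 0 < bb t := fun t => hb_pos _ (le_max_right _ _)
  set BB : ℝ → ℝ := fun t => ∫ s in (0:ℝ)..t, bb s with hBB_def
  have hBB_deriv : ∀ t, HasDerivAt BB (bb t) t := by
    intro t
    exact intervalIntegral.integral_hasDerivAt_right (hbb_cont.intervalIntegrable 0 t)
      hbb_cont.aestronglyMeasurable.stronglyMeasurableAtFilter hbb_cont.continuousAt
  have hBB_eq : ∀ t, 0 ≤ t → BB t = B t := by
    intro t ht
    rw [hB]
    apply intervalIntegral.integral_congr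
    intro s hs
    rw [uIcc_of_le ht] at hs
    exact hbb_eq s hs.1
  have hBB_mono : Monotone BB :=
    monotone_of_deriv_nonneg (fun t => (hBB_deriv t).differentiableAt)
      (fun t => by rw [(hBB_deriv t).deriv]; exact (hbb_pos t).le)
  have hBB0 : BB 0 = 0 := by simp [hBB_def]
  have hBB_cont : Continuous BB :=
    continuous_iff_continuousAt.2 fun t => (hBB_deriv t).continuousAt
  have hβpos : (0:ℝ) < 1 - β := by linarith
  have h1t : ∀ s : ℝ, 0 ≤ s → (0:ℝ) < 1 + s := fun s hs => by linarith
  have hF : ∀ s : ℝ, 0 ≤ s →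
      HasDerivAt (fun u => b₁ / (1 - β) * (1 + u) ^ (1 - β)) (b₁ * (1 + s) ^ (-β)) s := by
    intro s hs
    have h := (HasDerivAt.rpow_const (p := 1 - β) ((hasDerivAt_id s).const_add 1)
      (Or.inl (h1t s hs).ne')).const_mul (b₁ / (1 - β))
    have he : (1:ℝ) - β - 1 = -β := by ring
    rw [he] at h
    refine h.congr_deriv ?_
    field_simp
    rfl
  have hIntlow : ∀ τ, 0 ≤ τ →
      (∫ s in (0:ℝ)..τ, b₁ * (1 + s) ^ (-β)) = b₁ / (1 - β) * ((1 + τ) ^ (1 - β) - 1) := by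
    intro τ hτ
    have h : (∫ s in (0:ℝ)..τ, b₁ * (1 + s) ^ (-β))
        = (b₁ / (1 - β) * (1 + τ) ^ (1 - β)) - (b₁ / (1 - β) * (1 + 0) ^ (1 - β)) := by
      apply intervalIntegral.integral_eq_sub_of_hasDerivAt
      · intro s hs; rw [uIcc_of_le hτ] at hs; exact hF s hs.1
      · apply ContinuousOn.intervalIntegrable
        apply ContinuousOn.mul continuousOn_const
        apply ContinuousOn.rpow_const (by fun_prop)
        intro s hs; rw [uIcc_of_le hτ] at hs; exact Or.inl (h1t s hs.1).ne'
    rw [h]; norm_num; ring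
  have hgrow : ∀ τ, 0 ≤ τ → b₁ / (1 - β) * ((1 + τ) ^ (1 - β) - 1) ≤ BB τ := by
    intro τ hτ
    rw [← hIntlow τ hτ]
    apply intervalIntegral.integral_mono_on hτ
    · apply ContinuousOn.intervalIntegrable
      apply ContinuousOn.mul continuousOn_const
      apply ContinuousOn.rpow_const (by fun_prop)
      intro s hs; rw [uIcc_of_le hτ] at hs; exact Or.inl (h1t s hs.1).ne'
    · exact hbb_cont.intervalIntegrable _ _
    · intro s hs; rw [hbb_eq s hs.1]; exact hlow s hs.1
  -- integrability of exp (-BB) on Ioi 0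
  have hexp_int : ∀ c p : ℝ, 0 < c → 0 < p →
      IntegrableOn (fun x : ℝ => Real.exp (-(c * x ^ p))) (Ioi (0:ℝ)) := by
    intro c p hc hp
    have h1 : IntegrableOn (fun x : ℝ => x ^ (1/p - 1) * Real.exp (-c * x ^ (1:ℝ))) (Ioi 0) :=
      integrableOn_rpow_mul_exp_neg_mul_rpow (by linarith [one_div_pos.mpr hp]) one_pos hc
    have h2 : IntegrableOn
        (fun x : ℝ => x ^ (1/p - 1) • Real.exp (-(c * (x ^ (1/p)) ^ p))) (Ioi 0) := by
      apply h1.congr_fun _ measurableSet_Ioi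
      intro x hx
      simp only [smul_eq_mul]
      rw [← Real.rpow_mul (le_of_lt hx), one_div_mul_cancel hp.ne', Real.rpow_one, neg_mul]
    exact (integrableOn_Ioi_comp_rpow_iff' _ (one_div_ne_zero hp.ne')).mp h2
  have hint : IntegrableOn (fun τ => Real.exp (-BB τ)) (Ioi (0:ℝ)) := by
    have hc : 0 < b₁ / (1 - β) := by positivity
    apply Integrable.mono'
      (((hexp_int _ (1-β) hc hβpos).const_mul (Real.exp (b₁/(1-β)))))
      ((hBB_cont.neg.rexp).aestronglyMeasurable)
    filter_upwards [ae_restrict_mem measurableSet_Ioi] with τ hτ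
    have hτ0 : (0:ℝ) ≤ τ := le_of_lt hτ
    rw [Real.norm_eq_abs, abs_of_pos (Real.exp_pos _), ← Real.exp_add]
    apply Real.exp_le_exp.2
    have h3 : τ ^ (1-β) ≤ (1+τ) ^ (1-β) :=
      Real.rpow_le_rpow hτ0 (by linarith) hβpos.le
    have := hgrow τ hτ0
    simp only [Pi.neg_apply]
    nlinarith [hgrow τ hτ0]
  -- the tail integral function
  set I : ℝ → ℝ := fun t => B₀ - ∫ τ in (0:ℝ)..t, Real.exp (-BB τ) with hI_def
  have hexp_cont : Continuous (fun τ => Real.exp (-BB τ)) := (hBB_cont.neg).rexp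
  have hB₀I : B₀ = ∫ τ in Ioi (0:ℝ), Real.exp (-BB τ) := by
    rw [hB₀]
    apply setIntegral_congr_fun measurableSet_Ioi
    intro τ hτ
    exact (congrArg (fun x => Real.exp (-x)) (hBB_eq τ (le_of_lt hτ))).symm
  have hI0 : I 0 = B₀ := by simp [hI_def]
  have hI_int : ∀ t, 0 ≤ t → I t = ∫ τ in Ioi t, Real.exp (-BB τ) := by
    intro t ht
    have hu : Ioc (0:ℝ) t ∪ Ioi t = Ioi 0 := Ioc_union_Ioi_eq_Ioi ht
    have hd : Disjoint (Ioc (0:ℝ) t) (Ioi t) := by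
      apply disjoint_left.2
      intro x hx1 hx2
      exact absurd hx1.2 (not_le.2 hx2)
    have hsplit : B₀ = (∫ τ in Ioc (0:ℝ) t, Real.exp (-BB τ))
        + ∫ τ in Ioi t, Real.exp (-BB τ) := by
      rw [hB₀I, ← hu]
      exact setIntegral_union hd measurableSet_Ioi
        (hint.mono_set (Ioc_subset_Ioi_self.trans (Ioi_subset_Ioi le_rfl)))
        (hint.mono_set (Ioi_subset_Ioi ht))
    rw [hI_def]
    simp only
    rw [intervalIntegral.integral_of_le ht, hsplit]
    ring
  have hI_nonneg : ∀ t, 0 ≤ t → 0 ≤ I t := by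
    intro t ht
    rw [hI_int t ht]
    apply setIntegral_nonneg measurableSet_Ioi
    intro τ _; positivity
  have hI_deriv : ∀ t, HasDerivAt I (-(Real.exp (-BB t))) t := by
    intro t
    have h := intervalIntegral.integral_hasDerivAt_right
      (hexp_cont.intervalIntegrable 0 t)
      (hexp_cont.aestronglyMeasurable.stronglyMeasurableAtFilter) hexp_cont.continuousAt
    simpa [hI_def] using (h.const_sub B₀)
  have hI_sub : ∀ s t : ℝ, I t - I s = ∫ τ in t..s, Real.exp (-BB τ) := by
    intro s t
    rw [hI_def]
    simp only
    rw [← intervalIntegral.integral_interval_sub_left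
      (hexp_cont.intervalIntegrable 0 s) (hexp_cont.intervalIntegrable 0 t)]
    ring
  have hg' : ∀ t, 0 ≤ t → g t = Real.exp (BB t) * I t := by
    intro t ht
    rw [hg, hBB_eq t ht, hI_def]
    simp only
    congr 2
    apply intervalIntegral.integral_congr
    intro s hs
    rw [uIcc_of_le ht] at hs
    exact (congrArg (fun x => Real.exp (-x)) (hBB_eq s hs.1)).symm
  have htendI : Filter.Tendsto I Filter.atTop (nhds 0) := by
    have h1 := intervalIntegral_tendsto_integral_Ioi 0 hint Filter.tendsto_id
    have h2 : Filter.Tendsto I Filter.atTop (nhds (B₀ - ∫ τ in Ioi (0:ℝ), Real.exp (-BB τ))) :=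
      Filter.Tendsto.sub tendsto_const_nhds h1
    rwa [← hB₀I, sub_self] at h2
  -- two simple comparisons between b and powers
  have hblow_inv : ∀ t, 0 ≤ t → b₁ * (b t)⁻¹ ≤ (1+t) ^ β := by
    intro t ht
    have hbt := hb_pos t ht
    have h := hlow t ht
    rw [Real.rpow_neg (h1t t ht).le] at h
    have hp : 0 < (1+t) ^ β := Real.rpow_pos_of_pos (h1t t ht) β
    rw [mul_inv_le_iff₀ hbt]
    rw [mul_inv_le_iff₀ hp] at h
    linarith [h]
  have hbupp_inv : ∀ t, 0 ≤ t → (1+t) ^ β ≤ b₂ * (b t)⁻¹ := by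
    intro t ht
    have hbt := hb_pos t ht
    have h := hupp t ht
    rw [Real.rpow_neg (h1t t ht).le] at h
    have hp : 0 < (1+t) ^ β := Real.rpow_pos_of_pos (h1t t ht) β
    have h2 := mul_le_mul_of_nonneg_left h (le_of_lt hp)
    have h3 : (1+t)^β * (b₂ * ((1+t)^β)⁻¹) = b₂ := by field_simp
    rw [h3] at h2
    calc (1+t)^β = ((1+t)^β * b t) * (b t)⁻¹ := by field_simp
      _ ≤ b₂ * (b t)⁻¹ := mul_le_mul_of_nonneg_right h2 (inv_nonneg.2 hbt.le)
  -- lower bound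
  have hlower : ∀ t, 0 ≤ t → (b₁ * min 1 (1/(2*b₂)) / Real.exp 1) * (b t)⁻¹ ≤ g t := by
    intro t ht
    have h1 : (0:ℝ) < 1 + t := h1t t ht
    have hbt := hb_pos t ht
    set δ : ℝ := min (1+t) ((1+t)^β / (2*b₂)) with hδ_def
    have hδ1 : δ ≤ 1 + t := min_le_left _ _
    have hδ2 : δ ≤ (1+t)^β / (2*b₂) := min_le_right _ _
    have hδpos : 0 < δ := lt_min h1 (by positivity)
    have hbble : ∀ s, s ∈ Icc t (t+δ) → bb s ≤ 2*b₂*(1+t)^(-β) := by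
      intro s hs
      have hs0 : (0:ℝ) ≤ s := le_trans ht hs.1
      have h2 : 1 + s ≤ 2*(1+t) := by
        have := hs.2; linarith
      have h2' : (0:ℝ) < 1 + s := h1t s hs0
      have hkey : (1+s)^(-β) ≤ 2*(1+t)^(-β) := by
        rcases le_or_gt 0 β with hβ | hβ
        · have ha : (1+s)^(-β) ≤ (1+t)^(-β) := by
            apply Real.rpow_le_rpow_of_nonpos h1 (by linarith [hs.1]) (by linarith)
          have hb : (0:ℝ) < (1+t)^(-β) := Real.rpow_pos_of_pos h1 _
          linarith
        · have ha : (1+s)^(-β) ≤ (2*(1+t))^(-β) :=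
            Real.rpow_le_rpow h2'.le h2 (by linarith)
          have hb : (2*(1+t))^(-β) = 2^(-β) * (1+t)^(-β) :=
            Real.mul_rpow (by norm_num) h1.le
          have hc : (2:ℝ)^(-β) ≤ 2^(1:ℝ) :=
            Real.rpow_le_rpow_of_exponent_le (by norm_num) (by linarith)
          rw [Real.rpow_one] at hc
          have hd : (0:ℝ) < (1+t)^(-β) := Real.rpow_pos_of_pos h1 _
          nlinarith
      rw [hbb_eq s hs0]
      calc b s ≤ b₂ * (1+s)^(-β) := hupp s hs0
        _ ≤ b₂ * (2*(1+t)^(-β)) := by nlinarith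
        _ = 2*b₂*(1+t)^(-β) := by ring
    have hBBd : ∀ τ, τ ∈ Icc t (t+δ) → BB τ - BB t ≤ 1 := by
      intro τ hτ
      have h2 : BB τ - BB t = ∫ s in t..τ, bb s := by
        rw [hBB_def]
        simp only
        rw [← intervalIntegral.integral_interval_sub_left
          (hbb_cont.intervalIntegrable 0 τ) (hbb_cont.intervalIntegrable 0 t)]
      rw [h2]
      have h3 : (∫ s in t..τ, bb s) ≤ ∫ _s in t..τ, 2*b₂*(1+t)^(-β) :=
        intervalIntegral.integral_mono_on hτ.1 (hbb_cont.intervalIntegrable _ _)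
          intervalIntegrable_const
          (fun s hs => hbble s ⟨hs.1, le_trans hs.2 hτ.2⟩)
      rw [intervalIntegral.integral_const, smul_eq_mul] at h3
      have hM : (0:ℝ) ≤ 2*b₂*(1+t)^(-β) := by positivity
      have h4 : (τ - t) * (2*b₂*(1+t)^(-β)) ≤ δ * (2*b₂*(1+t)^(-β)) := by
        apply mul_le_mul_of_nonneg_right _ hM
        linarith [hτ.2]
      have h7 : (1+t)^β * (1+t)^(-β) = 1 := by
        rw [← Real.rpow_add h1]; norm_num
      have h5 : δ * (2*b₂*(1+t)^(-β)) ≤ 1 := by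
        have h8 : ((1+t)^β/(2*b₂)) * (2*b₂*(1+t)^(-β)) = (1+t)^β * (1+t)^(-β) := by
          field_simp
        calc δ * (2*b₂*(1+t)^(-β)) ≤ ((1+t)^β/(2*b₂)) * (2*b₂*(1+t)^(-β)) :=
              mul_le_mul_of_nonneg_right hδ2 hM
          _ = 1 := by rw [h8, h7]
      linarith
    have h8 : ∀ τ, τ ∈ Icc t (t+δ) → Real.exp (-(BB t) - 1) ≤ Real.exp (-BB τ) := by
      intro τ hτ
      apply Real.exp_le_exp.2
      have := hBBd τ hτ
      linarith
    have h9 : δ * Real.exp (-(BB t) - 1) ≤ ∫ τ in t..(t+δ), Real.exp (-BB τ) := by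
      have h10 := intervalIntegral.integral_mono_on (by linarith : t ≤ t + δ)
        (intervalIntegrable_const (μ := volume)) (hexp_cont.intervalIntegrable _ _) h8
      rw [intervalIntegral.integral_const, smul_eq_mul] at h10
      calc δ * Real.exp (-(BB t) - 1) = (t + δ - t) * Real.exp (-(BB t) - 1) := by ring_nf
        _ ≤ _ := h10
    have hIlow : δ * Real.exp (-(BB t) - 1) ≤ I t := by
      have h11 := hI_sub (t+δ) t
      have h12 : 0 ≤ I (t+δ) := hI_nonneg _ (by linarith)
      linarith
    rw [hg' t ht]
    have hE : (0:ℝ) < Real.exp (BB t) := Real.exp_pos _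
    have h13 : Real.exp (BB t) * (δ * Real.exp (-(BB t) - 1)) = δ / Real.exp 1 := by
      rw [div_eq_mul_inv, ← Real.exp_neg]
      rw [mul_comm (Real.exp (BB t)) _, mul_assoc, ← Real.exp_add]
      ring_nf
    have h14 : δ / Real.exp 1 ≤ Real.exp (BB t) * I t := by
      rw [← h13]
      exact mul_le_mul_of_nonneg_left hIlow hE.le
    refine le_trans ?_ h14
    -- (b₁ * min 1 (1/(2*b₂)) / exp 1) * (b t)⁻¹ ≤ δ / exp 1
    rw [div_mul_eq_mul_div, div_le_div_iff_of_pos_right (Real.exp_pos 1)]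
    -- b₁ * min 1 (1/(2*b₂)) * (b t)⁻¹ ≤ δ
    have h15 : b₁ * (b t)⁻¹ ≤ (1+t)^β := hblow_inv t ht
    have hm0 : (0:ℝ) ≤ min 1 (1/(2*b₂)) := le_min (by norm_num) (by positivity)
    have h16 : b₁ * min 1 (1/(2*b₂)) * (b t)⁻¹ ≤ (1+t)^β * min 1 (1/(2*b₂)) := by
      have : b₁ * min 1 (1/(2*b₂)) * (b t)⁻¹ = (b₁ * (b t)⁻¹) * min 1 (1/(2*b₂)) := by ring
      rw [this]
      exact mul_le_mul_of_nonneg_right h15 hm0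
    refine le_trans h16 (le_min ?_ ?_)
    · have ha : (1+t)^β ≤ 1 + t := by
        have := Real.rpow_le_rpow_of_exponent_le (by linarith : (1:ℝ) ≤ 1+t) hβ2.le
        rwa [Real.rpow_one] at this
      have hp : (0:ℝ) ≤ (1+t)^β := (Real.rpow_pos_of_pos h1 _).le
      calc (1+t)^β * min 1 (1/(2*b₂)) ≤ (1+t)^β * 1 :=
            mul_le_mul_of_nonneg_left (min_le_left _ _) hp
        _ ≤ 1 + t := by rw [mul_one]; exact ha
    · have hp : (0:ℝ) ≤ (1+t)^β := (Real.rpow_pos_of_pos h1 _).le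
      calc (1+t)^β * min 1 (1/(2*b₂)) ≤ (1+t)^β * (1/(2*b₂)) :=
            mul_le_mul_of_nonneg_left (min_le_right _ _) hp
        _ = (1+t)^β / (2*b₂) := by ring
  -- upper bound
  have hK : (0:ℝ) < 2/b₁ := by positivity
  set T : ℝ := max 1 ((2/b₁) ^ (1/(1-β))) with hT_def
  have hT1 : (1:ℝ) ≤ T := le_max_left _ _
  have hKey : ∀ s, T ≤ s → 1 ≤ (2/b₁) * (bb s * (1+s)^β - β*(1+s)^(β-1)) := by
    intro s hsT
    have hs0 : (0:ℝ) ≤ s := le_trans (by linarith) hsT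
    have h1s : (0:ℝ) < 1 + s := h1t s hs0
    have e1 : b₁ ≤ bb s * (1+s)^β := by
      rw [hbb_eq s hs0]
      have h := mul_le_mul_of_nonneg_right (hlow s hs0) (Real.rpow_pos_of_pos h1s β).le
      rwa [mul_assoc, ← Real.rpow_add h1s, neg_add_cancel, Real.rpow_zero, mul_one] at h
    have e2 : β * (1+s)^(β-1) ≤ b₁/2 := by
      rcases le_or_gt β 0 with hβ | hβ
      · have hp : (0:ℝ) < (1+s)^(β-1) := Real.rpow_pos_of_pos h1s _
        nlinarith
      · have hTs : (2/b₁) ^ ((1:ℝ)/(1-β)) ≤ 1 + s := by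
          have h5 := le_max_right (1:ℝ) ((2/b₁) ^ (1/(1-β)))
          rw [← hT_def] at h5
          linarith
        have hq : (0:ℝ) < (2/b₁) ^ ((1:ℝ)/(1-β)) := Real.rpow_pos_of_pos hK _
        have h2 : (1+s)^(β-1) ≤ ((2/b₁)^((1:ℝ)/(1-β)))^(β-1) :=
          Real.rpow_le_rpow_of_nonpos hq hTs (by linarith)
        have h3 : ((2/b₁)^((1:ℝ)/(1-β)))^(β-1) = b₁/2 := by
          rw [← Real.rpow_mul hK.le]
          have he : (1:ℝ)/(1-β) * (β-1) = -1 := by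
            field_simp
            ring
          rw [he, Real.rpow_neg_one, inv_div]
        have hp : (0:ℝ) ≤ (1+s)^(β-1) := (Real.rpow_pos_of_pos h1s _).le
        have h4 : β * (1+s)^(β-1) ≤ 1 * (1+s)^(β-1) :=
          mul_le_mul_of_nonneg_right (by linarith) hp
        rw [one_mul] at h4
        rw [h3] at h2
        linarith
    have e3 : b₁/2 ≤ bb s * (1+s)^β - β*(1+s)^(β-1) := by linarith
    calc (1:ℝ) = (2/b₁) * (b₁/2) := by field_simp
      _ ≤ _ := mul_le_mul_of_nonneg_left e3 hK.le
  set hfun : ℝ → ℝ := fun u => (2/b₁) * (1+u)^β * Real.exp (-(BB u)) with hfun_def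
  have hφderiv : ∀ s : ℝ, 0 < s → HasDerivAt (fun u => I u - hfun u)
      (Real.exp (-(BB s)) * ((2/b₁) * (bb s * (1+s)^β - β*(1+s)^(β-1)) - 1)) s := by
    intro s hs
    have h1s : (0:ℝ) < 1 + s := by linarith
    have d1 : HasDerivAt (fun u : ℝ => (1+u)^β) (β*(1+s)^(β-1)) s := by
      have h := HasDerivAt.rpow_const (p := β) ((hasDerivAt_id s).const_add 1) (Or.inl h1s.ne')
      simpa using h
    have d2 : HasDerivAt (fun u => Real.exp (-(BB u))) (Real.exp (-(BB s)) * (-(bb s))) s :=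
      ((hBB_deriv s).neg).exp
    have d3 : HasDerivAt hfun
        ((2/b₁) * (β*(1+s)^(β-1)) * Real.exp (-(BB s))
          + (2/b₁) * (1+s)^β * (Real.exp (-(BB s)) * (-(bb s)))) s :=
      (d1.const_mul (2/b₁)).mul d2
    have d4 := (hI_deriv s).sub d3
    refine d4.congr_deriv ?_
    ring
  have hφcont : ContinuousOn (fun u => I u - hfun u) (Ici T) := by
    intro s hs
    have hspos : (0:ℝ) < s := lt_of_lt_of_le (lt_of_lt_of_le zero_lt_one hT1) hs
    exact ((hφderiv s hspos).continuousAt).continuousWithinAt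
  have hφmono : MonotoneOn (fun u => I u - hfun u) (Ici T) := by
    apply monotoneOn_of_deriv_nonneg (convex_Ici T) hφcont
    · intro s hs
      rw [interior_Ici] at hs
      have hspos : (0:ℝ) < s := lt_of_le_of_lt (by linarith : (0:ℝ) ≤ T) hs
      exact ((hφderiv s hspos).differentiableAt).differentiableWithinAt
    · intro s hs
      rw [interior_Ici] at hs
      have hspos : (0:ℝ) < s := lt_of_le_of_lt (by linarith : (0:ℝ) ≤ T) hs
      rw [(hφderiv s hspos).deriv]
      have h5 := hKey s hs.le
      have h6 : (0:ℝ) < Real.exp (-(BB s)) := Real.exp_pos _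
      nlinarith
  have hc : (0:ℝ) < b₁/(1-β) := by positivity
  have htendh : Filter.Tendsto hfun Filter.atTop (nhds 0) := by
    have hG : Filter.Tendsto (fun u : ℝ => (1+u)^(1-β)) Filter.atTop Filter.atTop := by
      apply (tendsto_rpow_atTop hβpos).comp
      exact Filter.tendsto_atTop_add_const_left _ 1 Filter.tendsto_id
    have hF0 := (tendsto_rpow_mul_exp_neg_mul_atTop_nhds_zero ((1:ℝ)/(1-β)) (b₁/(1-β)) hc).comp hG
    have hF : Filter.Tendsto (fun u : ℝ => (1+u) * Real.exp (-(b₁/(1-β)) * (1+u)^(1-β)))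
        Filter.atTop (nhds 0) := by
      apply hF0.congr'
      filter_upwards [Filter.eventually_ge_atTop (0:ℝ)] with u hu
      have : ((1+u)^(1-β))^((1:ℝ)/(1-β)) = 1+u := by
        rw [← Real.rpow_mul (by linarith : (0:ℝ) ≤ 1+u)]
        rw [mul_one_div, div_self hβpos.ne', Real.rpow_one]
      simp only [Function.comp]
      rw [this]
    have hM : (0:ℝ) ≤ (2/b₁) * Real.exp (b₁/(1-β)) := by positivity
    apply squeeze_zero' (f := hfun)
      (g := fun u => ((2/b₁) * Real.exp (b₁/(1-β))) * ((1+u) * Real.exp (-(b₁/(1-β)) * (1+u)^(1-β))))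
    · filter_upwards [Filter.eventually_ge_atTop (0:ℝ)] with u hu
      have : (0:ℝ) < 1 + u := by linarith
      rw [hfun_def]
      positivity
    · filter_upwards [Filter.eventually_ge_atTop (0:ℝ)] with u hu
      have h1u : (0:ℝ) < 1 + u := by linarith
      have hA : (1+u)^β ≤ 1+u := by
        have := Real.rpow_le_rpow_of_exponent_le (by linarith : (1:ℝ) ≤ 1+u) hβ2.le
        rwa [Real.rpow_one] at this
      have hB' : Real.exp (-(BB u)) ≤ Real.exp (b₁/(1-β)) * Real.exp (-(b₁/(1-β)) * (1+u)^(1-β)) := by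
        rw [← Real.exp_add]
        apply Real.exp_le_exp.2
        have h7 := hgrow u hu
        nlinarith
      have hp1 : (0:ℝ) ≤ (1+u)^β := (Real.rpow_pos_of_pos h1u _).le
      have hp2 : (0:ℝ) < Real.exp (-(BB u)) := Real.exp_pos _
      calc (2/b₁) * (1+u)^β * Real.exp (-(BB u))
          ≤ (2/b₁) * (1+u) * (Real.exp (b₁/(1-β)) * Real.exp (-(b₁/(1-β)) * (1+u)^(1-β))) := by
            apply mul_le_mul (mul_le_mul_of_nonneg_left hA hK.le) hB' hp2.le
            positivity
        _ = ((2/b₁) * Real.exp (b₁/(1-β))) * ((1+u) * Real.exp (-(b₁/(1-β)) * (1+u)^(1-β))) := by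
            ring
    · have := hF.const_mul (((2:ℝ)/b₁) * Real.exp (b₁/(1-β)))
      simpa using this
  have hφtend : Filter.Tendsto (fun u => I u - hfun u) Filter.atTop (nhds 0) := by
    have := htendI.sub htendh
    simpa using this
  have hφle : ∀ t, T ≤ t → I t ≤ hfun t := by
    intro t htT
    have h0 : I t - hfun t ≤ 0 := by
      apply ge_of_tendsto hφtend
      filter_upwards [Filter.eventually_ge_atTop t, Filter.eventually_ge_atTop T] with s hs1 hs2
      exact hφmono htT hs2 hs1
    linarith
  have hupper1 : ∀ t, T ≤ t → g t ≤ ((2/b₁) * b₂) * (b t)⁻¹ := by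
    intro t htT
    have ht0 : (0:ℝ) ≤ t := le_trans (by linarith) htT
    rw [hg' t ht0]
    have h2 : Real.exp (BB t) * I t ≤ Real.exp (BB t) * hfun t :=
      mul_le_mul_of_nonneg_left (hφle t htT) (Real.exp_pos _).le
    have h3 : Real.exp (BB t) * hfun t = (2/b₁) * (1+t)^β := by
      rw [hfun_def]
      simp only
      rw [Real.exp_neg]
      field_simp
    have h4 : (1+t)^β ≤ b₂ * (b t)⁻¹ := hbupp_inv t ht0
    calc Real.exp (BB t) * I t ≤ (2/b₁) * (1+t)^β := by rw [← h3]; exact h2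
      _ ≤ (2/b₁) * (b₂ * (b t)⁻¹) := mul_le_mul_of_nonneg_left h4 hK.le
      _ = ((2/b₁)*b₂) * (b t)⁻¹ := by ring
  have hB₀0 : 0 ≤ B₀ := by rw [← hI0]; exact hI_nonneg 0 le_rfl
  have hupper2 : ∀ t, 0 ≤ t → t ≤ T → g t ≤ (Real.exp (BB T) * B₀ * b₂ * (1+T)) * (b t)⁻¹ := by
    intro t ht htT
    have hbt := hb_pos t ht
    have h1 : (0:ℝ) < 1 + t := h1t t ht
    have hIle : I t ≤ B₀ := by
      rw [← hI0]
      have h2 := hI_sub t 0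
      have h3 : 0 ≤ ∫ τ in (0:ℝ)..t, Real.exp (-BB τ) :=
        intervalIntegral.integral_nonneg ht (fun τ _ => (Real.exp_pos _).le)
      linarith
    have hg1 : g t ≤ Real.exp (BB T) * B₀ := by
      rw [hg' t ht]
      exact mul_le_mul (Real.exp_le_exp.2 (hBB_mono htT)) hIle (hI_nonneg t ht) (Real.exp_pos _).le
    have hbT : b t ≤ b₂ * (1+T) := by
      have h2 : (1+t)^(-β) ≤ 1+t := by
        have := Real.rpow_le_rpow_of_exponent_le (by linarith : (1:ℝ) ≤ 1+t) (by linarith : -β ≤ 1)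
        rwa [Real.rpow_one] at this
      have h5 := hupp t ht
      nlinarith
    have hinv : (b₂ * (1+T))⁻¹ ≤ (b t)⁻¹ := by
      apply inv_anti₀ hbt hbT
    have hco : 0 ≤ Real.exp (BB T) * B₀ * b₂ * (1+T) := by
      apply mul_nonneg (mul_nonneg (mul_nonneg (Real.exp_pos _).le hB₀0) hb₂.le)
      linarith
    calc g t ≤ Real.exp (BB T) * B₀ := hg1
      _ = (Real.exp (BB T) * B₀ * b₂ * (1+T)) * (b₂ * (1+T))⁻¹ := by
          have h1T : (0:ℝ) < 1 + T := by linarith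
          field_simp
      _ ≤ (Real.exp (BB T) * B₀ * b₂ * (1+T)) * (b t)⁻¹ :=
          mul_le_mul_of_nonneg_left hinv hco
  -- assemble
  set clow : ℝ := b₁ * min 1 (1/(2*b₂)) / Real.exp 1 with hclow_def
  have hclow_pos : 0 < clow :=
    div_pos (mul_pos hb₁ (lt_min one_pos (by positivity))) (Real.exp_pos 1)
  set cup : ℝ := max (((2:ℝ)/b₁) * b₂) (Real.exp (BB T) * B₀ * b₂ * (1+T)) with hcup_def
  refine ⟨max (max clow⁻¹ cup) 1, le_max_right _ _, ?_⟩
  intro t ht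
  have hbt := hb_pos t ht
  constructor
  · have h1 : (max (max clow⁻¹ cup) 1)⁻¹ ≤ clow := by
      have h0 : clow⁻¹ ≤ max (max clow⁻¹ cup) 1 :=
        le_trans (le_max_left _ _) (le_max_left _ _)
      have h1' := inv_anti₀ (inv_pos.2 hclow_pos) h0
      rwa [inv_inv] at h1'
    calc (max (max clow⁻¹ cup) 1)⁻¹ * (b t)⁻¹ ≤ clow * (b t)⁻¹ :=
        mul_le_mul_of_nonneg_right h1 (inv_nonneg.2 hbt.le)
      _ ≤ g t := hlower t ht
  · have h2 : cup ≤ max (max clow⁻¹ cup) 1 := le_trans (le_max_right _ _) (le_max_left _ _)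
    have h3 : g t ≤ cup * (b t)⁻¹ := by
      rcases le_total T t with hc' | hc'
      · exact le_trans (hupper1 t hc')
          (mul_le_mul_of_nonneg_right (le_max_left _ _) (inv_nonneg.2 hbt.le))
      · exact le_trans (hupper2 t ht hc')
          (mul_le_mul_of_nonneg_right (le_max_right _ _) (inv_nonneg.2 hbt.le))
    exact le_trans h3 (mul_le_mul_of_nonneg_right h2 (inv_nonneg.2 hbt.le))
end

section
/- Let −1 ≤ β < 1 and let b : [0,∞) → ℝ be a positive C¹ function with b₁(1+t)^{−β} ≤ b(t) ≤ b₂(1+t)^{−β} and |b'(t)| ≤ b₃(1+t)^{−1}b(t) for all t ≥ 0 and some b₁,b₂,b₃ > 0. Set B(t) := ∫₀^t b(s)ds, B₀ := ∫₀^∞ e^{−B(t)}dt, and g(t) := e^{B(t)}(B₀ − ∫₀^t e^{−B(τ)}dτ). Then lim_{t→∞} b(t)g(t) = 1. -/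
set_option autoImplicit false

open MeasureTheory Real Set Filter Topology

private lemma aux_decay (c γ p : ℝ) (hc : 0 < c) (hγ : 0 < γ) :
    Tendsto (fun τ : ℝ => (1 + τ) ^ p * Real.exp (-(c * (1 + τ) ^ γ))) atTop (𝓝 0) := by
  have h1 : Tendsto (fun u : ℝ => u ^ (p / γ) * Real.exp (-c * u)) atTop (𝓝 0) :=
    tendsto_rpow_mul_exp_neg_mul_atTop_nhds_zero (p / γ) c hc
  have h2 : Tendsto (fun τ : ℝ => (1 + τ) ^ γ) atTop atTop :=
    (tendsto_rpow_atTop hγ).comp (tendsto_atTop_add_const_left atTop 1 tendsto_id)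
  refine (h1.comp h2).congr' ?_
  filter_upwards [eventually_ge_atTop (0 : ℝ)] with τ hτ
  have h0 : (0 : ℝ) ≤ 1 + τ := by linarith
  have hpow : ((1 + τ) ^ γ) ^ (p / γ) = (1 + τ) ^ p := by
    rw [← Real.rpow_mul h0]; congr 1; field_simp
  simp only [Function.comp_apply, hpow, neg_mul]

set_option maxHeartbeats 1000000 in
/-- Let `−1 ≤ β < 1` and let `b` be a positive `C¹` function with
`b₁(1+t)^{−β} ≤ b(t) ≤ b₂(1+t)^{−β}` and `|b'(t)| ≤ b₃(1+t)^{−1}b(t)`.  With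
`B(t) = ∫₀^t b`, `B₀ = ∫₀^∞ e^{−B}` and `g(t) = e^{B(t)}(B₀ − ∫₀^t e^{−B})`, one has
`lim_{t→∞} b(t)g(t) = 1`. -/
theorem aux_bg_tendsto_one (β : ℝ) (hβ1 : -1 ≤ β) (hβ2 : β < 1)
    (b b' : ℝ → ℝ) (hb_pos : ∀ t, 0 ≤ t → 0 < b t)
    (hb_deriv : ∀ t, 0 ≤ t → HasDerivWithinAt b (b' t) (Ici 0) t)
    (hb'_cont : ContinuousOn b' (Ici 0))
    (b₁ b₂ b₃ : ℝ) (hb₁ : 0 < b₁) (hb₂ : 0 < b₂) (hb₃ : 0 < b₃)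
    (hlow : ∀ t, 0 ≤ t → b₁ * (1 + t) ^ (-β) ≤ b t)
    (hupp : ∀ t, 0 ≤ t → b t ≤ b₂ * (1 + t) ^ (-β))
    (hb' : ∀ t, 0 ≤ t → |b' t| ≤ b₃ * (1 + t)⁻¹ * b t)
    (B : ℝ → ℝ) (hB : ∀ t, B t = ∫ s in (0:ℝ)..t, b s)
    (B₀ : ℝ) (hB₀ : B₀ = ∫ t in Ioi (0:ℝ), Real.exp (-B t))
    (g : ℝ → ℝ) (hg : ∀ t, g t = Real.exp (B t) * (B₀ - ∫ τ in (0:ℝ)..t, Real.exp (-B τ))) :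
    Tendsto (fun t => b t * g t) atTop (nhds 1) := by
  -- basic facts
  have hb_cont : ContinuousOn b (Ici 0) := fun t ht => (hb_deriv t ht).continuousWithinAt
  have hb_ne : ∀ t : ℝ, 0 ≤ t → b t ≠ 0 := fun t ht => (hb_pos t ht).ne'
  have hb_int : ∀ v : ℝ, 0 ≤ v → IntervalIntegrable b volume 0 v := by
    intro v hv
    exact (hb_cont.mono (by rw [uIcc_of_le hv]; exact fun x hx => hx.1)).intervalIntegrable
  have hBeq : B = fun u => ∫ s in (0:ℝ)..u, b s := funext hB
  have hB_deriv : ∀ τ : ℝ, 0 < τ → HasDerivAt B (b τ) τ := by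
    intro τ hτ
    rw [hBeq]
    have hct : ContinuousAt b τ := hb_cont.continuousAt (Ici_mem_nhds hτ)
    exact intervalIntegral.integral_hasDerivAt_right (hb_int τ hτ.le)
      (ContinuousOn.stronglyMeasurableAtFilter isOpen_Ioi (hb_cont.mono Ioi_subset_Ici_self) τ hτ)
      hct
  have hB_cont : ContinuousOn B (Ici 0) := by
    intro x hx
    have hx0 : (0:ℝ) ≤ x := hx
    have hsub : Icc (0:ℝ) (x+1) ⊆ Ici 0 := fun y hy => hy.1
    have h1 : ContinuousOn B (Icc 0 (x+1)) := by
      rw [hBeq]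
      have hI : IntegrableOn b (uIcc (0:ℝ) (x+1)) volume := by
        rw [uIcc_of_le (by linarith : (0:ℝ) ≤ x+1)]
        exact (hb_cont.mono hsub).integrableOn_compact isCompact_Icc
      have := intervalIntegral.continuousOn_primitive_interval hI
      rwa [uIcc_of_le (by linarith : (0:ℝ) ≤ x+1)] at this
    refine (h1 x ⟨hx0, by linarith⟩).mono_of_mem_nhdsWithin ?_
    rw [← Ici_inter_Iic]
    exact inter_mem_nhdsWithin _ (Iic_mem_nhds (by linarith))
  -- lower bound on B and integrability of exp (-B)
  set m : ℝ := max β 0 with hm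
  have hm0 : 0 ≤ m := le_max_right _ _
  set γ : ℝ := 1 - m with hγdef
  have hγ : 0 < γ := by
    have : m < 1 := max_lt hβ2 one_pos
    simp only [hγdef]; linarith
  have hBlow : ∀ t : ℝ, 0 ≤ t → b₁ * ((1+t) ^ γ - 1) ≤ B t := by
    intro t ht
    have h1t : (1:ℝ) ≤ 1 + t := by linarith
    have key : ∀ x ∈ Icc (0:ℝ) t, b₁ * (1+t) ^ (-m) ≤ b x := by
      intro x hx
      have h1x : (1:ℝ) ≤ 1 + x := by linarith [hx.1]
      have hle : (1+t) ^ (-m) ≤ (1+x) ^ (-β) := by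
        rcases le_or_gt 0 β with hβ | hβ
        · rw [show m = β from max_eq_left hβ]
          exact Real.rpow_le_rpow_of_nonpos (by linarith [hx.1]) (by linarith [hx.2])
            (by linarith)
        · have h2 : (1+t) ^ (-m) ≤ 1 := by
            rw [show m = 0 from max_eq_right hβ.le]
            simp
          exact h2.trans (Real.one_le_rpow h1x (by linarith))
      exact le_trans (mul_le_mul_of_nonneg_left hle hb₁.le) (hlow x hx.1)
    have hint : (∫ _s in (0:ℝ)..t, b₁ * (1+t)^(-m)) ≤ ∫ s in (0:ℝ)..t, b s :=
      intervalIntegral.integral_mono_on ht intervalIntegrable_const (hb_int t ht) key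
    rw [hB]
    refine le_trans ?_ hint
    rw [intervalIntegral.integral_const, smul_eq_mul, sub_zero]
    have h1t0 : (0:ℝ) < 1 + t := by linarith
    have hsplit : (1+t) ^ γ = (1+t) * (1+t) ^ (-m) := by
      rw [hγdef, sub_eq_add_neg, Real.rpow_add h1t0, Real.rpow_one]
    have hle1 : (1+t) ^ (-m) ≤ 1 :=
      Real.rpow_le_one_of_one_le_of_nonpos h1t (neg_nonpos.mpr hm0)
    have hP : 0 < (1+t) ^ (-m) := Real.rpow_pos_of_pos h1t0 _
    nlinarith [hP, hle1]
  have hExpBound : ∀ τ : ℝ, 0 ≤ τ →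
      Real.exp (-B τ) ≤ Real.exp b₁ * Real.exp (-(b₁ * (1+τ) ^ γ)) := by
    intro τ hτ
    rw [← Real.exp_add]
    apply Real.exp_le_exp.2
    have := hBlow τ hτ
    nlinarith
  have hExpInt : IntegrableOn (fun τ => Real.exp (-B τ)) (Ioi (0:ℝ)) := by
    have hd : Tendsto (fun τ : ℝ => Real.exp b₁ * ((1+τ)^(2:ℝ) * Real.exp (-(b₁*(1+τ)^γ))))
        atTop (𝓝 0) := by
      have := (aux_decay b₁ γ 2 hb₁ hγ).const_mul (Real.exp b₁)
      simpa [mul_comm] using this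
    have hev : ∀ᶠ τ : ℝ in atTop,
        Real.exp b₁ * ((1+τ)^(2:ℝ) * Real.exp (-(b₁*(1+τ)^γ))) < 1 :=
      hd.eventually_lt_const one_pos
    obtain ⟨T, hT⟩ := (hev.and (eventually_ge_atTop (1:ℝ))).exists_forall_of_atTop
    have hT1 : (1:ℝ) ≤ max T 1 := le_max_right _ _
    have hT10 : (0:ℝ) < max T 1 := lt_of_lt_of_le one_pos hT1
    have key : ∀ τ : ℝ, max T 1 ≤ τ → Real.exp (-B τ) ≤ τ ^ (-2 : ℝ) := by
      intro τ hτ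
      obtain ⟨hb1, _⟩ := hT τ (le_trans (le_max_left _ _) hτ)
      have hτ1 : (1:ℝ) ≤ τ := le_trans hT1 hτ
      have hτ0 : (0:ℝ) < τ := lt_of_lt_of_le one_pos hτ1
      have h1τ : (0:ℝ) < 1 + τ := by linarith
      have hP : (0:ℝ) < (1+τ)^(2:ℝ) := Real.rpow_pos_of_pos h1τ _
      have h3 : Real.exp b₁ * Real.exp (-(b₁*(1+τ)^γ)) ≤ (1+τ)^(-(2:ℝ)) := by
        rw [Real.rpow_neg h1τ.le]
        rw [← one_div, le_div_iff₀ hP]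
        nlinarith
      have h4 : (1+τ)^(-(2:ℝ)) ≤ τ^(-(2:ℝ)) :=
        Real.rpow_le_rpow_of_nonpos hτ0 (by linarith) (by norm_num)
      calc Real.exp (-B τ) ≤ _ := hExpBound τ (by linarith)
        _ ≤ (1+τ)^(-(2:ℝ)) := h3
        _ ≤ τ ^ (-(2:ℝ)) := h4
    have hint2 : IntegrableOn (fun τ => Real.exp (-B τ)) (Ioi (max T 1)) := by
      refine Integrable.mono (integrableOn_Ioi_rpow_of_lt (by norm_num : (-2:ℝ) < -1) hT10)
        (((Real.continuous_exp.comp_continuousOn hB_cont.neg).mono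
          (fun x (hx : x ∈ Ioi (max T 1)) => le_of_lt (lt_of_le_of_lt hT10.le hx))).aestronglyMeasurable
          measurableSet_Ioi) ?_
      filter_upwards [ae_restrict_mem measurableSet_Ioi] with τ hτ
      have hτ0 : (0:ℝ) < τ := lt_trans hT10 hτ
      rw [Real.norm_eq_abs, Real.norm_eq_abs, abs_of_nonneg (Real.exp_pos _).le,
        abs_of_nonneg (Real.rpow_nonneg hτ0.le _)]
      exact key τ (le_of_lt hτ)
    have hint1 : IntegrableOn (fun τ => Real.exp (-B τ)) (Ioc 0 (max T 1)) := by
      have hc : ContinuousOn (fun τ => Real.exp (-B τ)) (Icc 0 (max T 1)) :=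
        (Real.continuous_exp.comp_continuousOn hB_cont.neg).mono (fun y hy => hy.1)
      exact (hc.integrableOn_compact isCompact_Icc).mono_set Ioc_subset_Icc_self
    have := hint1.union hint2
    rwa [Ioc_union_Ioi_eq_Ioi hT10.le] at this
  -- inverse bound
  have hinv : ∀ τ : ℝ, 0 ≤ τ → (b τ)⁻¹ ≤ (1+τ)^β / b₁ := by
    intro τ hτ
    have h1τ : (0:ℝ) < 1 + τ := by linarith
    have hQ : 0 < (1+τ)^(-β) := Real.rpow_pos_of_pos h1τ _
    have h2 : (b τ)⁻¹ ≤ (b₁ * (1+τ)^(-β))⁻¹ :=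
      inv_anti₀ (mul_pos hb₁ hQ) (hlow τ hτ)
    calc (b τ)⁻¹ ≤ (b₁ * (1+τ)^(-β))⁻¹ := h2
      _ = b₁⁻¹ * ((1+τ)^(-β))⁻¹ := mul_inv _ _
      _ = b₁⁻¹ * (1+τ)^β := by rw [Real.rpow_neg h1τ.le, inv_inv]
      _ = (1+τ)^β / b₁ := by rw [inv_mul_eq_div]
  -- limit of the antiderivative at infinity
  have hFlim : Tendsto (fun τ => -(Real.exp (-B τ) / b τ)) atTop (𝓝 0) := by
    have hlim : Tendsto (fun τ : ℝ =>
        (Real.exp b₁ / b₁) * ((1+τ)^(1:ℝ) * Real.exp (-(b₁*(1+τ)^γ)))) atTop (𝓝 0) := by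
      have := (aux_decay b₁ γ 1 hb₁ hγ).const_mul (Real.exp b₁ / b₁)
      simpa [mul_comm] using this
    refine squeeze_zero_norm' ?_ hlim
    filter_upwards [eventually_ge_atTop (0:ℝ)] with τ hτ
    have h1τ : (0:ℝ) < 1+τ := by linarith
    have hbτ := hb_pos τ hτ
    have hE : (0:ℝ) ≤ Real.exp (-B τ) := (Real.exp_pos _).le
    rw [norm_neg, Real.norm_eq_abs, abs_of_nonneg (div_nonneg hE hbτ.le)]
    have h1 : Real.exp (-B τ) / b τ ≤ Real.exp (-B τ) * ((1+τ)^β / b₁) := by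
      rw [div_eq_mul_inv]
      exact mul_le_mul_of_nonneg_left (hinv τ hτ) hE
    have h2 : (1+τ)^β ≤ (1+τ)^(1:ℝ) :=
      Real.rpow_le_rpow_of_exponent_le (by linarith) hβ2.le
    have h3 : Real.exp (-B τ) ≤ Real.exp b₁ * Real.exp (-(b₁*(1+τ)^γ)) := hExpBound τ hτ
    calc Real.exp (-B τ) / b τ ≤ Real.exp (-B τ) * ((1+τ)^β / b₁) := h1
      _ ≤ (Real.exp b₁ * Real.exp (-(b₁*(1+τ)^γ))) * ((1+τ)^(1:ℝ) / b₁) := by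
          gcongr
      _ = (Real.exp b₁ / b₁) * ((1+τ)^(1:ℝ) * Real.exp (-(b₁*(1+τ)^γ))) := by ring
  -- pointwise bound on the remainder integrand
  have hptw : ∀ t τ : ℝ, 0 ≤ t → t ≤ τ →
      |Real.exp (-B τ) * (b' τ / (b τ)^2)| ≤ ((b₃/b₁) * (1+t)^(β-1)) * Real.exp (-B τ) := by
    intro t τ ht htτ
    have hτ0 : (0:ℝ) ≤ τ := le_trans ht htτ
    have h1τ : (0:ℝ) < 1+τ := by linarith
    have h1t : (0:ℝ) < 1+t := by linarith
    have hbτ := hb_pos τ hτ0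
    have hq : |b' τ| / (b τ)^2 ≤ (b₃/b₁) * (1+τ)^(β-1) := by
      have e1 : |b' τ| / (b τ)^2 ≤ (b₃ * (1+τ)⁻¹ * b τ) / (b τ)^2 := by
        gcongr
        exact hb' τ hτ0
      have e2 : (b₃ * (1+τ)⁻¹ * b τ) / (b τ)^2 = (b₃ * (1+τ)⁻¹) * (b τ)⁻¹ := by
        field_simp
      have e3 : (b₃ * (1+τ)⁻¹) * (b τ)⁻¹ ≤ (b₃ * (1+τ)⁻¹) * ((1+τ)^β / b₁) := by
        apply mul_le_mul_of_nonneg_left (hinv τ hτ0)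
        positivity
      have e4 : (b₃ * (1+τ)⁻¹) * ((1+τ)^β / b₁) = (b₃/b₁) * ((1+τ)^β / (1+τ)) := by
        field_simp
      have e5 : (1+τ)^β / (1+τ) = (1+τ)^(β-1) := by
        rw [Real.rpow_sub h1τ, Real.rpow_one]
      calc |b' τ| / (b τ)^2 ≤ (b₃ * (1+τ)⁻¹ * b τ) / (b τ)^2 := e1
        _ = (b₃ * (1+τ)⁻¹) * (b τ)⁻¹ := e2
        _ ≤ (b₃ * (1+τ)⁻¹) * ((1+τ)^β / b₁) := e3
        _ = (b₃/b₁) * ((1+τ)^β / (1+τ)) := e4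
        _ = (b₃/b₁) * (1+τ)^(β-1) := by rw [e5]
    have hmono : (1+τ)^(β-1) ≤ (1+t)^(β-1) :=
      Real.rpow_le_rpow_of_nonpos h1t (by linarith) (by linarith)
    have habs : |Real.exp (-B τ) * (b' τ / (b τ)^2)|
        = Real.exp (-B τ) * (|b' τ| / (b τ)^2) := by
      rw [abs_mul, abs_of_nonneg (Real.exp_pos (-B τ)).le, abs_div,
        abs_of_nonneg (sq_nonneg (b τ))]
    rw [habs]
    calc Real.exp (-B τ) * (|b' τ| / (b τ)^2)
        ≤ Real.exp (-B τ) * ((b₃/b₁) * (1+t)^(β-1)) := by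
          refine mul_le_mul_of_nonneg_left ?_ (Real.exp_pos _).le
          exact hq.trans (mul_le_mul_of_nonneg_left hmono (by positivity))
      _ = ((b₃/b₁) * (1+t)^(β-1)) * Real.exp (-B τ) := mul_comm _ _
  -- continuity of remainder integrand
  have hRcont : ContinuousOn (fun τ => Real.exp (-B τ) * (b' τ / (b τ)^2)) (Ici 0) :=
    (Real.continuous_exp.comp_continuousOn hB_cont.neg).mul
      (hb'_cont.div (hb_cont.pow 2) (fun x hx => pow_ne_zero 2 (hb_ne x hx)))
  -- the small quantity
  set ε : ℝ → ℝ := fun t => (b₃/b₁) * (1+t)^(β-1) with hεdef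
  have hεtend : Tendsto ε atTop (𝓝 0) := by
    have h1 : Tendsto (fun t : ℝ => (1+t)^(β-1)) atTop (𝓝 0) := by
      have h2 := (tendsto_rpow_neg_atTop (by linarith : (0:ℝ) < 1 - β)).comp
        (tendsto_atTop_add_const_left atTop 1 tendsto_id)
      refine h2.congr (fun t => ?_)
      simp only [Function.comp_apply, id_eq, neg_sub]
    have := h1.const_mul (b₃/b₁)
    simpa [hεdef, mul_comm] using this
  -- main eventual estimate
  have hkey : ∀ᶠ t in atTop, ‖b t * g t - 1‖ ≤ 2 * ε t := by
    filter_upwards [eventually_ge_atTop (1:ℝ),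
      hεtend.eventually_lt_const (by norm_num : (0:ℝ) < 1/2)] with t ht hεt
    have ht0 : (0:ℝ) < t := lt_of_lt_of_le one_pos ht
    have ht0' : (0:ℝ) ≤ t := ht0.le
    have h1t : (0:ℝ) < 1 + t := by linarith
    have hbt := hb_pos t ht0'
    have hIint : IntegrableOn (fun τ => Real.exp (-B τ)) (Ioi t) :=
      hExpInt.mono_set (Ioi_subset_Ioi ht0')
    set It := ∫ τ in Ioi t, Real.exp (-B τ) with hItdef
    have hIt0 : 0 ≤ It :=
      setIntegral_nonneg measurableSet_Ioi (fun τ _ => (Real.exp_pos _).le)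
    have hRint : IntegrableOn (fun τ => Real.exp (-B τ) * (b' τ / (b τ)^2)) (Ioi t) := by
      refine Integrable.mono (hIint.const_mul ((b₃/b₁) * (1+t)^(β-1)))
        ((hRcont.mono (fun x (hx : x ∈ Ioi t) => le_of_lt (lt_trans ht0 hx))).aestronglyMeasurable
          measurableSet_Ioi) ?_
      filter_upwards [ae_restrict_mem measurableSet_Ioi] with τ hτ
      rw [Real.norm_eq_abs, Real.norm_eq_abs]
      exact (hptw t τ ht0' (le_of_lt hτ)).trans (le_abs_self _)
    have hFat : ∀ τ : ℝ, 0 < τ → HasDerivAt (fun x => -(Real.exp (-B x) / b x))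
        (Real.exp (-B τ) + Real.exp (-B τ) * (b' τ / (b τ)^2)) τ := by
      intro τ hτ0
      have hBd := hB_deriv τ hτ0
      have hbd : HasDerivAt b (b' τ) τ := (hb_deriv τ hτ0.le).hasDerivAt (Ici_mem_nhds hτ0)
      have h1 : HasDerivAt (fun x => Real.exp (-B x)) (Real.exp (-B τ) * (-b τ)) τ := by
        simpa using (hBd.neg).exp
      have h2 := (h1.div hbd (hb_ne τ hτ0.le)).neg
      refine h2.congr_deriv ?_
      have hbne := hb_ne τ hτ0.le
      field_simp
      ring
    have hident : (∫ τ in Ioi t, (Real.exp (-B τ) + Real.exp (-B τ) * (b' τ / (b τ)^2)))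
        = Real.exp (-B t) / b t := by
      have h := integral_Ioi_of_hasDerivAt_of_tendsto
        ((hFat t ht0).continuousAt.continuousWithinAt)
        (fun τ hτ => hFat τ (lt_trans ht0 hτ)) (hIint.add hRint) hFlim
      rw [h]; ring
    rw [integral_add hIint hRint] at hident
    set Rt := ∫ τ in Ioi t, Real.exp (-B τ) * (b' τ / (b τ)^2) with hRdef
    rw [← hItdef] at hident
    have hsplit : (∫ τ in Ioc 0 t, Real.exp (-B τ)) + It = B₀ := by
      rw [hB₀, ← setIntegral_union (Ioc_disjoint_Ioi le_rfl) measurableSet_Ioi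
        (hExpInt.mono_set Ioc_subset_Ioi_self) hIint, Ioc_union_Ioi_eq_Ioi ht0']
    have hioc : (∫ τ in (0:ℝ)..t, Real.exp (-B τ)) = ∫ τ in Ioc 0 t, Real.exp (-B τ) :=
      intervalIntegral.integral_of_le ht0'
    have hgt : g t = Real.exp (B t) * It := by
      rw [hg, hioc]
      congr 1
      linarith
    have hRb : |Rt| ≤ ε t * It := by
      have h1 : |Rt| ≤ ∫ τ in Ioi t, |Real.exp (-B τ) * (b' τ / (b τ)^2)| := by
        exact norm_integral_le_integral_norm
          (μ := volume.restrict (Ioi t)) (fun τ => Real.exp (-B τ) * (b' τ / (b τ)^2))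
      have h2 : (∫ τ in Ioi t, |Real.exp (-B τ) * (b' τ / (b τ)^2)|)
          ≤ ∫ τ in Ioi t, ((b₃/b₁) * (1+t)^(β-1)) * Real.exp (-B τ) :=
        setIntegral_mono_on hRint.abs (hIint.const_mul _) measurableSet_Ioi
          (fun τ hτ => hptw t τ ht0' (le_of_lt hτ))
      have h3 : (∫ τ in Ioi t, ((b₃/b₁) * (1+t)^(β-1)) * Real.exp (-B τ))
          = ((b₃/b₁) * (1+t)^(β-1)) * It := integral_const_mul _ _
      calc |Rt| ≤ _ := h1
        _ ≤ _ := h2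
        _ = ε t * It := h3
    have hIdent2 : It = Real.exp (-B t) / b t - Rt := by linarith
    have hbg : b t * g t = 1 - (b t * Real.exp (B t)) * Rt := by
      rw [hgt, hIdent2, Real.exp_neg]
      have hbne := hb_ne t ht0'
      have hene := Real.exp_ne_zero (B t)
      field_simp
    have hbgnn : 0 ≤ b t * g t := by
      rw [hgt]
      exact mul_nonneg hbt.le (mul_nonneg (Real.exp_pos _).le hIt0)
    have hε0 : 0 ≤ ε t :=
      mul_nonneg (by positivity) (Real.rpow_nonneg h1t.le _)
    have habs2 : |b t * g t - 1| ≤ ε t * (b t * g t) := by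
      have hrw : b t * g t - 1 = -((b t * Real.exp (B t)) * Rt) := by rw [hbg]; ring
      rw [hrw, abs_neg, abs_mul, abs_of_pos (mul_pos hbt (Real.exp_pos _))]
      calc (b t * Real.exp (B t)) * |Rt| ≤ (b t * Real.exp (B t)) * (ε t * It) :=
          mul_le_mul_of_nonneg_left hRb (mul_pos hbt (Real.exp_pos _)).le
        _ = ε t * (b t * (Real.exp (B t) * It)) := by ring
        _ = ε t * (b t * g t) := by rw [← hgt]
    rw [Real.norm_eq_abs]
    have h4 := le_abs_self (b t * g t - 1)
    have h5 : ε t * (b t * g t) ≤ (1/2) * (b t * g t) :=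
      mul_le_mul_of_nonneg_right hεt.le hbgnn
    have h6 : b t * g t ≤ 2 := by linarith
    have h7 : ε t * (b t * g t) ≤ ε t * 2 :=
      mul_le_mul_of_nonneg_left h6 hε0
    linarith
  have h0 : Tendsto (fun t => b t * g t - 1) atTop (𝓝 0) := by
    refine squeeze_zero_norm' hkey ?_
    simpa using hεtend.const_mul 2
  have hfin := h0.add_const 1
  simpa using hfin
end

section
/- Let E be a real Banach space, I ⊆ ℝ an interval, b : I → ℝ, g : I → ℝ twice differentiable with −g'(t) + b(t)g(t) = 1 for all t ∈ I, and u : I → E twice differentiable. Then for every t ∈ I, (g·u)''(t) − (g'·u)'(t) + u'(t) = g(t)·(u''(t) + b(t)u'(t)). In particular, if u solves u'' + A u + b(t)u' = h(t) for a linear map A and a function h, then (g·u)'' + A(g·u) − (g'·u)' + u' = g(t)h(t). -/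
set_option autoImplicit false

open Set

/-- Divergence-form rewriting: if `−g' + b·g = 1` on an interval `I`, `g` is
twice differentiable and `u : I → E` is twice differentiable, then
`(g·u)'' − (g'·u)' + u' = g·(u'' + b·u')` on `I`; here `(g·u)' = g'·u + g·u'` and the second
derivatives are computed accordingly.  In particular, if `u'' + A u + b u' = h` for a linear
map `A`, then `(g·u)'' + A(g·u) − (g'·u)' + u' = g·h`. -/
theorem divergence_form_rewriting
    (E : Type*) [NormedAddCommGroup E] [NormedSpace ℝ E]
    (I : Set ℝ) (hI : I.OrdConnected)
    (b g' g'' : ℝ → ℝ) (g : ℝ → ℝ) (u u' u'' : ℝ → E)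
    (hg1 : ∀ t ∈ I, HasDerivWithinAt g (g' t) I t)
    (hg2 : ∀ t ∈ I, HasDerivWithinAt g' (g'' t) I t)
    (hu1 : ∀ t ∈ I, HasDerivWithinAt u (u' t) I t)
    (hu2 : ∀ t ∈ I, HasDerivWithinAt u' (u'' t) I t)
    (hbg : ∀ t ∈ I, -g' t + b t * g t = 1) :
    (∀ t ∈ I,
      -- first derivative of `g·u`
      HasDerivWithinAt (fun s => g s • u s) (g' t • u t + g t • u' t) I t ∧
      -- second derivative of `g·u`, i.e. derivative of `g'·u + g·u'`
      HasDerivWithinAt (fun s => g' s • u s + g s • u' s)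
        (g'' t • u t + (2 * g' t) • u' t + g t • u'' t) I t ∧
      -- first derivative of `g'·u`
      HasDerivWithinAt (fun s => g' s • u s) (g'' t • u t + g' t • u' t) I t ∧
      -- the identity `(g·u)''(t) − (g'·u)'(t) + u'(t) = g(t)(u''(t) + b(t)u'(t))`
      (g'' t • u t + (2 * g' t) • u' t + g t • u'' t) - (g'' t • u t + g' t • u' t) + u' t
        = g t • (u'' t + b t • u' t)) ∧
    -- in particular
    (∀ (A : E →ₗ[ℝ] E) (h : ℝ → E),
      (∀ t ∈ I, u'' t + A (u t) + b t • u' t = h t) →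
      ∀ t ∈ I,
        (g'' t • u t + (2 * g' t) • u' t + g t • u'' t) + A (g t • u t)
            - (g'' t • u t + g' t • u' t) + u' t
          = g t • h t) := by
  have key : ∀ t ∈ I,
      HasDerivWithinAt (fun s => g s • u s) (g' t • u t + g t • u' t) I t ∧
      HasDerivWithinAt (fun s => g' s • u s + g s • u' s)
        (g'' t • u t + (2 * g' t) • u' t + g t • u'' t) I t ∧
      HasDerivWithinAt (fun s => g' s • u s) (g'' t • u t + g' t • u' t) I t ∧
      (g'' t • u t + (2 * g' t) • u' t + g t • u'' t) - (g'' t • u t + g' t • u' t) + u' t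
        = g t • (u'' t + b t • u' t) := by
    intro t ht
    have hb : g t * b t = 1 + g' t := by have := hbg t ht; linarith
    refine ⟨?_, ?_, ?_, ?_⟩
    · have := (hg1 t ht).smul (hu1 t ht); convert this using 1; rfl; module
    · have := ((hg2 t ht).smul (hu1 t ht)).add ((hg1 t ht).smul (hu2 t ht))
      convert this using 1; rfl; module
    · have := (hg2 t ht).smul (hu1 t ht); convert this using 1; rfl; module
    · rw [smul_add, smul_smul, hb]; module
  refine ⟨key, ?_⟩
  intro A h hA t ht
  have hb : g t * b t = 1 + g' t := by have := hbg t ht; linarith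
  rw [map_smul, ← hA t ht, smul_add, smul_add, smul_smul, hb]
  module
end
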